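/- Let p_0, p_1 ∈ K and q_0, q_1 ∈ K satisfy p_0 p_1 (p_0 − p_1) ≠ 0 and q_0 q_1 (q_0 − q_1) ≠ 0. Then the tuples ([e_0], [e_1], [p_0 e_0 + p_1 e_1], [e_2], [e_0+e_1+e_2]) and ([e_0], [e_1], [q_0 e_0 + q_1 e_1], [e_2], [e_0+e_1+e_2]) in ℙ(K^4)^5 are in the same GL_4-orbit if and only if there exists c ∈ K, c ≠ 0, with q_0 = c · p_0 and q_1 = c · p_1. -/

import Mathlib

open scoped LinearAlgebra.Projectivization

/-- Two tuples of points are in the same `GL_n`-orbit. -/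
def SameOrbit {K : Type*} [Field K] {n m : ℕ}
    (v w : Fin m → ℙ K (Fin n → K)) : Prop :=
  ∃ g : (Fin n → K) ≃ₗ[K] (Fin n → K),
    ∀ i, w i = Projectivization.map g.toLinearMap g.injective (v i)

lemma ne_zero_of_apply_ne_zero {K : Type*} [Field K] {n : ℕ} {u : Fin n → K} {i : Fin n}
    (h : u i ≠ 0) : u ≠ 0 := fun h0 => h (by rw [h0]; rfl)

/-- the tuples `([e₀],[e₁],[p],[e₂],[e₀+e₁+e₂])` and
`([e₀],[e₁],[q],[e₂],[e₀+e₁+e₂])` with `p, q` generic in the line `⟨e₀,e₁⟩` are in the same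
`GL_4`-orbit iff `q` is a nonzero scalar multiple of `p`. -/
theorem sameOrbit_iff_proportional_5_8 (K : Type*) [Field K] [IsAlgClosed K] [CharZero K]
    (p₀ p₁ q₀ q₁ : K)
    (hp : p₀ * p₁ * (p₀ - p₁) ≠ 0) (hq : q₀ * q₁ * (q₀ - q₁) ≠ 0) :
    SameOrbit
      ![Projectivization.mk K ![1,0,0,0] (ne_zero_of_apply_ne_zero (i := 0) (by norm_num)),
        Projectivization.mk K ![0,1,0,0] (ne_zero_of_apply_ne_zero (i := 1) (by norm_num)),
        Projectivization.mk K ![p₀,p₁,0,0] (ne_zero_of_apply_ne_zero (i := 0) (by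
          simpa using left_ne_zero_of_mul (left_ne_zero_of_mul hp))),
        Projectivization.mk K ![0,0,1,0] (ne_zero_of_apply_ne_zero (i := 2) (by exact one_ne_zero)),
        Projectivization.mk K ![1,1,1,0] (ne_zero_of_apply_ne_zero (i := 0) (by norm_num))]
      ![Projectivization.mk K ![1,0,0,0] (ne_zero_of_apply_ne_zero (i := 0) (by norm_num)),
        Projectivization.mk K ![0,1,0,0] (ne_zero_of_apply_ne_zero (i := 1) (by norm_num)),
        Projectivization.mk K ![q₀,q₁,0,0] (ne_zero_of_apply_ne_zero (i := 0) (by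
          simpa using left_ne_zero_of_mul (left_ne_zero_of_mul hq))),
        Projectivization.mk K ![0,0,1,0] (ne_zero_of_apply_ne_zero (i := 2) (by exact one_ne_zero)),
        Projectivization.mk K ![1,1,1,0] (ne_zero_of_apply_ne_zero (i := 0) (by norm_num))]
    ↔ ∃ c : K, c ≠ 0 ∧ q₀ = c * p₀ ∧ q₁ = c * p₁ := by
  constructor
  · rintro ⟨g, hg⟩
    have e01 : (![1,1,1,0] : Fin 4 → K) = ![1,0,0,0] + ![0,1,0,0] + ![0,0,1,0] := by
      funext i; fin_cases i <;> simp
    have ep : (![p₀,p₁,0,0] : Fin 4 → K) = p₀ • ![1,0,0,0] + p₁ • ![0,1,0,0] := by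
      funext i; fin_cases i <;> simp
    have h0 := hg 0
    have h1 := hg 1
    have h2 := hg 2
    have h3 := hg 3
    have h4 := hg 4
    simp only [Matrix.cons_val_zero, Matrix.cons_val_one, Matrix.head_cons,
      Matrix.cons_val_two, Matrix.tail_cons, Matrix.cons_val_three, Matrix.cons_val_four,
      Projectivization.map_mk, Projectivization.mk_eq_mk_iff,
      LinearEquiv.coe_coe] at h0 h1 h2 h3 h4
    obtain ⟨a, ha⟩ := h0
    obtain ⟨b, hb⟩ := h1
    obtain ⟨s, hs⟩ := h2
    obtain ⟨d, hd⟩ := h3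
    obtain ⟨t, ht⟩ := h4
    have hf0 : g ![1,0,0,0] = a⁻¹ • ![1,0,0,0] := eq_inv_smul_iff.mpr ha
    have hf1 : g ![0,1,0,0] = b⁻¹ • ![0,1,0,0] := eq_inv_smul_iff.mpr hb
    have hf2 : g ![0,0,1,0] = d⁻¹ • ![0,0,1,0] := eq_inv_smul_iff.mpr hd
    have hsum : g ![1,1,1,0] = a⁻¹ • ![1,0,0,0] + b⁻¹ • ![0,1,0,0] + d⁻¹ • ![0,0,1,0] := by
      rw [e01, map_add, map_add, hf0, hf1, hf2]
    rw [hsum] at ht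
    have ht0 := congrFun ht 0
    have ht1 := congrFun ht 1
    simp [Units.smul_def] at ht0 ht1
    have hgp : g ![p₀,p₁,0,0] = p₀ • (a⁻¹ • ![1,0,0,0]) + p₁ • (b⁻¹ • ![0,1,0,0]) := by
      rw [ep, map_add, map_smul, map_smul, hf0, hf1]
    rw [hgp] at hs
    have hs0 := congrFun hs 0
    have hs1 := congrFun hs 1
    simp [Units.smul_def] at hs0 hs1
    have hab : ((↑(b : Kˣ) : K))⁻¹ = ((↑(a : Kˣ) : K))⁻¹ := by
      have htne : (t : K) ≠ 0 := Units.ne_zero t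
      field_simp at ht0 ht1
      rw [← ht1, ← ht0]
    refine ⟨(s : K) * ((↑(a : Kˣ) : K))⁻¹, by simp, ?_, ?_⟩
    · rw [← hs0]; ring
    · rw [← hs1, hab]; ring
  · rintro ⟨c, hc, hq0, hq1⟩
    subst hq0; subst hq1
    refine ⟨LinearEquiv.refl K _, fun i => ?_⟩
    have hid : Projectivization.map (LinearEquiv.refl K (Fin 4 → K)).toLinearMap
        (LinearEquiv.refl K (Fin 4 → K)).injective = id := Projectivization.map_id
    rw [hid]
    have key : Projectivization.mk K ![c*p₀,c*p₁,0,0] (ne_zero_of_apply_ne_zero (i := 0) (by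
          simpa using left_ne_zero_of_mul (left_ne_zero_of_mul hq))) =
        Projectivization.mk K ![p₀,p₁,0,0] (ne_zero_of_apply_ne_zero (i := 0) (by
          simpa using left_ne_zero_of_mul (left_ne_zero_of_mul hp))) :=
      (Projectivization.mk_eq_mk_iff K _ _ _ _).2 ⟨Units.mk0 c hc, by
        funext j; fin_cases j <;> simp [Units.smul_def]⟩
    fin_cases i
    · rfl
    · rfl
    · exact key
    · rfl
    · rfl
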